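/- arXiv:1311.3168 — 8 statements merged into one kernel-verified Lean document; each statement's English description precedes it below -/
import Mathlib

section
/- If u is a pair {s,t} of two distinct objects s ≠ t, then u is a set, i.e., u ∉ u. -/
/-- Extensional equality of objects: `s = t` iff they have the same members. -/
def eqE {Obj : Type} (mem : Obj → Obj → Prop) (s t : Obj) : Prop :=
  ∀ u, mem u s ↔ mem u t

/-- Inclusion: `a ⊆ b`. -/
def subE {Obj : Type} (mem : Obj → Obj → Prop) (a b : Obj) : Prop :=
  ∀ u, mem u a → mem u b

/-- `w` is the union `⋃ s`. -/
def isUnionOf {Obj : Type} (mem : Obj → Obj → Prop) (w s : Obj) : Prop :=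
  ∀ u, mem u w ↔ ∃ z, mem z s ∧ mem u z

/-- `t` is the successor `s ∪ {s}` of `s` (membership expressed directly). -/
def isSuccOf {Obj : Type} (mem : Obj → Obj → Prop) (t s : Obj) : Prop :=
  ∀ u, mem u t ↔ (mem u s ∨ eqE mem u s)

/-- `S` is an ordinal number with first number `α`:  `S ∉ α` and every
`X ∈ S ∪ {S}` satisfies `X ∈ α ∪ {α}` or (`α ∈ X` and `X = ⋃X ∪ {⋃X}`). -/
def isNat {Obj : Type} (mem : Obj → Obj → Prop) (α S : Obj) : Prop :=
  ¬ mem S α ∧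
  ∀ X, (mem X S ∨ eqE mem X S) →
    (mem X α ∨ eqE mem X α) ∨
    (mem α X ∧ ∃ U, isUnionOf mem U X ∧ isSuccOf mem X U)

/-- A pair of two distinct objects is a set. -/
theorem pair_of_distinct_is_set {Obj : Type} (mem : Obj → Obj → Prop)
    (subst : ∀ s t v, eqE mem s t → mem t v → mem s v)
    (indiv : ∀ p s, mem s p → mem p p → eqE mem s p)
    (s t u : Obj) (hu : ∀ x, mem x u ↔ (eqE mem x s ∨ eqE mem x t))
    (hst : ¬ eqE mem s t) :
    ¬ mem u u := by
  intro huu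
  have hs : mem s u := (hu s).mpr (Or.inl (fun x => Iff.rfl))
  have ht : mem t u := (hu t).mpr (Or.inr (fun x => Iff.rfl))
  have hsu := indiv u s hs huu
  have htu := indiv u t ht huu
  exact hst (fun x => (hsu x).trans (htu x).symm)
end

section
/- If a set belongs to a transitive set s, then some set of individuals (a set all of whose members are individuals) is a member of s. -/
/-- If a set belongs to a transitive set `s`, then a set of individuals is a
member of `s`. -/
theorem transitive_has_set_of_individuals {Obj : Type} (mem : Obj → Obj → Prop)
    (nonemptyAx : ∀ t : Obj, ∃ u, mem u t)
    (regularity : ∀ s, (∃ v, mem v s ∧ ¬ mem v v) →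
      ∃ v, mem v s ∧ ¬ mem v v ∧ ∀ u, mem u s → ¬ mem u u → ¬ mem u v)
    (s : Obj)
    (htrans : ∀ u, (∃ z, mem z s ∧ mem u z) → mem u s)
    (hset : ∃ v, mem v s ∧ ¬ mem v v) :
    ∃ w, mem w s ∧ ¬ mem w w ∧ ∀ z, mem z w → mem z z := by
  obtain ⟨v, hvs, hvv, hmin⟩ := regularity s hset
  exact ⟨v, hvs, hvv, fun z hz => by
    by_contra hzz
    exact hmin z (htrans z ⟨v, hvs, hz⟩) hzz hz⟩
end

section
/- Every member of a natural number S that is not a member of the first number α is itself a natural number. -/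
/-- Every member of a natural number that is not a member of the first number
is itself a natural number. -/
theorem mem_of_nat_isNat {Obj : Type} (mem : Obj → Obj → Prop)
    (subst : ∀ s t v, eqE mem s t → mem t v → mem s v)
    (indiv : ∀ p s, mem s p → mem p p → eqE mem s p)
    (pairing : ∀ s t, ∃ v, ∀ u, mem u v ↔ (eqE mem u s ∨ eqE mem u t))
    (union : ∀ s, ∃ v, isUnionOf mem v s)
    (regularity : ∀ s, (∃ v, mem v s ∧ ¬ mem v v) →
      ∃ v, mem v s ∧ ¬ mem v v ∧ ∀ u, mem u s → ¬ mem u u → ¬ mem u v)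
    (spec : ∀ (Φ : Obj → Prop) (s : Obj), (∃ u, mem u s ∧ Φ u) →
      ∃ v, ∀ u, mem u v ↔ (mem u s ∧ Φ u))
    (nonemptyAx : ∀ t : Obj, ∃ u, mem u t)
    (p q α : Obj) (hp : mem p p) (hq : mem q q)
    (hα : ∀ u, mem u α ↔ (eqE mem u p ∨ eqE mem u q))
    (S : Obj) (hS : isNat mem α S) :
    ∀ X, mem X S → ¬ mem X α → isNat mem α X := by
  intro X hXS hXα
  obtain ⟨hSα, hmem⟩ := hS
  refine ⟨hXα, ?_⟩
  intro Y hY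
  -- classify S itself
  rcases hmem S (Or.inr (fun u => Iff.rfl)) with (hSα' | hSeq) | ⟨hαS, U, hU, hsucc⟩
  · exact absurd hSα' hSα
  · exact absurd ((hSeq X).mp hXS) hXα
  · -- S = U ∪ {U} with U = ⋃S, so S is transitive
    have hYS : mem Y S := by
      rcases hY with hYX | hYX
      · exact (hsucc Y).mpr (Or.inl ((hU Y).mpr ⟨X, hXS, hYX⟩))
      · exact subst Y X S hYX hXS
    exact hmem Y (Or.inl hYS)
end

section
/- For natural numbers S and T, if S ⊆ T then S ∈ T or S = T. -/
theorem eqE_refl' {Obj : Type} (mem : Obj → Obj → Prop) (s : Obj) : eqE mem s s :=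
  fun _ => Iff.rfl

theorem eqE_symm' {Obj : Type} (mem : Obj → Obj → Prop) {s t : Obj}
    (h : eqE mem s t) : eqE mem t s := fun u => (h u).symm

theorem eqE_trans' {Obj : Type} (mem : Obj → Obj → Prop) {s t v : Obj}
    (h1 : eqE mem s t) (h2 : eqE mem t v) : eqE mem s v := fun u => (h1 u).trans (h2 u)

/-- For natural numbers, inclusion implies membership or equality. -/
theorem subset_mem_or_eq {Obj : Type} (mem : Obj → Obj → Prop)
    (subst : ∀ s t v, eqE mem s t → mem t v → mem s v)
    (indiv : ∀ p s, mem s p → mem p p → eqE mem s p)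
    (pairing : ∀ s t, ∃ v, ∀ u, mem u v ↔ (eqE mem u s ∨ eqE mem u t))
    (union : ∀ s, ∃ v, isUnionOf mem v s)
    (regularity : ∀ s, (∃ v, mem v s ∧ ¬ mem v v) →
      ∃ v, mem v s ∧ ¬ mem v v ∧ ∀ u, mem u s → ¬ mem u u → ¬ mem u v)
    (spec : ∀ (Φ : Obj → Prop) (s : Obj), (∃ u, mem u s ∧ Φ u) →
      ∃ v, ∀ u, mem u v ↔ (mem u s ∧ Φ u))
    (nonemptyAx : ∀ t : Obj, ∃ u, mem u t)
    (p q α : Obj) (hp : mem p p) (hq : mem q q)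
    (hα : ∀ u, mem u α ↔ (eqE mem u p ∨ eqE mem u q))
    (S T : Obj) (hS : isNat mem α S) (hT : isNat mem α T)
    (hsub : subE mem S T) :
    mem S T ∨ eqE mem S T := by
  -- generic transitivity of successor sets
  have succ_trans : ∀ B U, isUnionOf mem U B → isSuccOf mem B U →
      ∀ z u, mem z B → mem u z → mem u B := by
    intro B U hU hSu z u hz hu
    exact (hSu u).2 (Or.inl ((hU u).2 ⟨z, hz, hu⟩))
  -- build, for any X, a set W with  u ∈ W ↔ (u ∈ X ∨ u = X)
  have buildW : ∀ X : Obj, ∃ W, ∀ u, mem u W ↔ (mem u X ∨ eqE mem u X) := by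
    intro X
    obtain ⟨P1, hP1⟩ := pairing X X
    obtain ⟨P2, hP2⟩ := pairing X P1
    obtain ⟨W, hW⟩ := union P2
    refine ⟨W, fun u => ⟨?_, ?_⟩⟩
    · intro h
      obtain ⟨z, hzP2, huz⟩ := (hW u).1 h
      rcases (hP2 z).1 hzP2 with h1 | h1
      · exact Or.inl ((h1 u).1 huz)
      · rcases (hP1 u).1 ((h1 u).1 huz) with h2 | h2 <;> exact Or.inr h2
    · rintro (h | h)
      · exact (hW u).2 ⟨X, (hP2 X).2 (Or.inl (eqE_refl' mem X)), h⟩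
      · exact (hW u).2 ⟨P1, (hP2 P1).2 (Or.inr (eqE_refl' mem P1)),
          (hP1 u).2 (Or.inl h)⟩
  by_cases hdeg : mem α α
  · -- degenerate case: α ∈ α.  Every natural number is eqE α.
    have allα : ∀ N, isNat mem α N → eqE mem N α := by
      intro N hN
      by_contra hne
      rcases hN.2 N (Or.inr (eqE_refl' mem N)) with (h | h) | ⟨hαN, UN, hUNu, hUNs⟩
      · exact hN.1 h
      · exact hne h
      · -- N is a successor with α ∈ N and ¬ N = α : contradiction by regularity
        obtain ⟨W, hW⟩ := buildW N
        set Φ : Obj → Prop :=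
          fun B => mem α B ∧ (∃ U, isUnionOf mem U B ∧ isSuccOf mem B U) ∧ ¬ eqE mem B α
          with hΦ
        have hNW : mem N W := (hW N).2 (Or.inr (eqE_refl' mem N))
        obtain ⟨D, hD⟩ := spec Φ W ⟨N, hNW, hαN, ⟨UN, hUNu, hUNs⟩, hne⟩
        have hND : mem N D := (hD N).2 ⟨hNW, hαN, ⟨UN, hUNu, hUNs⟩, hne⟩
        have hDnself : ∀ u, mem u D → ¬ mem u u := by
          intro u hu huu
          obtain ⟨_, hαu, _, hne'⟩ := (hD u).1 hu
          exact hne' (eqE_symm' mem (indiv u α hαu huu))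
        obtain ⟨B, hBD, hBB, hmin⟩ := regularity D ⟨N, hND, hDnself N hND⟩
        obtain ⟨hBW, hαB, ⟨U, hUu, hUs⟩, hBne⟩ := (hD B).1 hBD
        have hUB : mem U B := (hUs U).2 (Or.inr (eqE_refl' mem U))
        have hNtrans := succ_trans N UN hUNu hUNs
        have hUN : mem U N := by
          rcases (hW B).1 hBW with hBN | hBN
          · exact hNtrans B U hBN hUB
          · exact (hBN U).1 hUB
        -- if U = α then B = α, contradiction
        have finish : eqE mem U α → False := by
          intro hUα
          apply hBne
          intro u
          constructor
          · intro hu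
            rcases (hUs u).1 hu with h' | h'
            · exact (hUα u).1 h'
            · exact subst u α α (eqE_trans' mem h' hUα) hdeg
          · intro hu
            exact (hUs u).2 (Or.inr (eqE_trans' mem (indiv α u hu hdeg)
              (eqE_symm' mem hUα)))
        rcases hN.2 U (Or.inl hUN) with (h' | h') | ⟨hαU, hUsd⟩
        · exact finish (indiv α U h' hdeg)
        · exact finish h'
        · by_cases heqUα : eqE mem U α
          · exact finish heqUα
          · have hUW : mem U W := (hW U).2 (Or.inl hUN)
            have hUD : mem U D := (hD U).2 ⟨hUW, hαU, hUsd, heqUα⟩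
            have hnUU : ¬ mem U U := fun h =>
              heqUα (eqE_symm' mem (indiv U α hαU h))
            exact hmin U hUD hnUU hUB
    exact Or.inr (eqE_trans' mem (allα S hS) (eqE_symm' mem (allα T hT)))
  · -- main case: ¬ α ∈ α
    by_contra hc
    push_neg at hc
    obtain ⟨hnmem, hneq⟩ := hc
    -- natural numbers are not self-membered
    have natnself : ∀ B, isNat mem α B → ¬ mem B B := by
      intro B hB hBB
      rcases hB.2 B (Or.inr (eqE_refl' mem B)) with (h | h) | ⟨hαB, _⟩
      · exact hB.1 h
      · exact hdeg (subst α B α (eqE_symm' mem h) ((h B).1 hBB))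
      · exact hdeg (((indiv B α hαB hBB) α).2 hαB)
    -- α is transitive
    have alphatrans : ∀ z u, mem z α → mem u z → mem u α := by
      intro z u hz hu
      rcases (hα z).1 hz with h | h
      · exact (hα u).2 (Or.inl (indiv p u ((h u).1 hu) hp))
      · exact (hα u).2 (Or.inr (indiv q u ((h u).1 hu) hq))
    -- T is transitive
    have hTtrans : ∀ z u, mem z T → mem u z → mem u T := by
      rcases hT.2 T (Or.inr (eqE_refl' mem T)) with (h | h) | ⟨_, U, hUu, hUs⟩
      · exact absurd h hT.1
      · intro z u hz hu
        exact (h u).2 (alphatrans z u ((h z).1 hz) hu)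
      · exact succ_trans T U hUu hUs
    obtain ⟨W, hW⟩ := buildW T
    set Φ : Obj → Prop := fun B => isNat mem α B ∧
      ∃ A, isNat mem α A ∧ subE mem A B ∧ ¬ mem A B ∧ ¬ eqE mem A B with hΦ
    have hTW : mem T W := (hW T).2 (Or.inr (eqE_refl' mem T))
    obtain ⟨D, hD⟩ := spec Φ W ⟨T, hTW, hT, S, hS, hsub, hnmem, hneq⟩
    have hTD : mem T D := (hD T).2 ⟨hTW, hT, S, hS, hsub, hnmem, hneq⟩
    have hDnself : ∀ u, mem u D → ¬ mem u u := fun u hu =>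
      natnself u ((hD u).1 hu).2.1
    obtain ⟨B, hBD, hBB, hmin⟩ := regularity D ⟨T, hTD, hDnself T hTD⟩
    obtain ⟨hBW, hBnat, A, hAnat, hAB, hAnm, hAne⟩ := (hD B).1 hBD
    rcases hBnat.2 B (Or.inr (eqE_refl' mem B)) with (h | hBα) | ⟨hαB, U, hUu, hUs⟩
    · exact hBnat.1 h
    · -- B = α : classify A
      rcases hAnat.2 A (Or.inr (eqE_refl' mem A)) with (h | h) | ⟨hαA, _⟩
      · exact hAnat.1 h
      · exact hAne (eqE_trans' mem h (eqE_symm' mem hBα))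
      · exact hdeg ((hBα α).1 (hAB α hαA))
    · -- B is a successor: B = U ∪ {U}
      have hUB : mem U B := (hUs U).2 (Or.inr (eqE_refl' mem U))
      rcases hAnat.2 A (Or.inr (eqE_refl' mem A)) with (h | hAα) | ⟨hαA, V, hVu, hVs⟩
      · exact hAnat.1 h
      · exact hAnm (subst A α B hAα hαB)
      · -- A is a successor: A = V ∪ {V}
        have hVA : mem V A := (hVs V).2 (Or.inr (eqE_refl' mem V))
        have hVB : mem V B := hAB V hVA
        rcases (hUs V).1 hVB with hVU | hVUe
        · -- V ∈ U: show U is a smaller counterexample point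
          have keyVr : ∀ r, mem r r → eqE mem V r → False := by
            intro r hr hVr
            have hVV : mem V V := (hVr V).2 (subst V r r hVr hr)
            rcases (hVs α).1 hαA with hαV | hαV
            · have h1 : eqE mem α r := indiv r α ((hVr α).1 hαV) hr
              have h2 : eqE mem α V := eqE_trans' mem h1 (eqE_symm' mem hVr)
              exact hdeg ((h2 α).2 hαV)
            · exact hdeg ((hαV α).2 (subst α V V hαV hVV))
          rcases hBnat.2 U (Or.inl hUB) with (hUα | hUαe) | ⟨hαU, U2, hU2u, hU2s⟩
          · -- U ∈ α : impossible
            rcases (hα U).1 hUα with h' | h'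
            · exact keyVr p hp (indiv p V ((h' V).1 hVU) hp)
            · exact keyVr q hq (indiv q V ((h' V).1 hVU) hq)
          · -- U = α : impossible
            rcases (hα V).1 ((hUαe V).1 hVU) with h' | h'
            · exact keyVr p hp h'
            · exact keyVr q hq h'
          · -- U is a successor; U is a nat
            have hUnat : isNat mem α U := by
              constructor
              · intro hUα
                rcases (hα U).1 hUα with h' | h'
                · have hUU : mem U U := (h' U).2 (subst U p p h' hp)
                  exact hdeg ((hα α).2 (Or.inl
                    (eqE_trans' mem (indiv U α hαU hUU) h')))
                · have hUU : mem U U := (h' U).2 (subst U q q h' hq)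
                  exact hdeg ((hα α).2 (Or.inr
                    (eqE_trans' mem (indiv U α hαU hUU) h')))
              · intro X hX
                rcases hX with hX | hX
                · exact hBnat.2 X (Or.inl (succ_trans B U hUu hUs U X hUB hX))
                · refine Or.inr ⟨(hX α).2 hαU, U2, ?_, ?_⟩
                  · intro u
                    rw [hU2u u]
                    constructor
                    · rintro ⟨z, hz, hu⟩
                      exact ⟨z, (hX z).2 hz, hu⟩
                    · rintro ⟨z, hz, hu⟩
                      exact ⟨z, (hX z).1 hz, hu⟩
                  · intro u
                    rw [← hU2s u]
                    exact hX u
            have hUtrans := succ_trans U U2 hU2u hU2s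
            have hAU : subE mem A U := by
              intro a ha
              rcases (hVs a).1 ha with h' | h'
              · exact hUtrans V a hVU h'
              · exact subst a V U h' hVU
            have hAnmU : ¬ mem A U := fun h => hAnm ((hUs A).2 (Or.inl h))
            have hAneU : ¬ eqE mem A U := fun h => hAnm (subst A U B h hUB)
            have hUT : mem U T := by
              rcases (hW B).1 hBW with hBT | hBT
              · exact hTtrans B U hBT hUB
              · exact (hBT U).1 hUB
            have hUD : mem U D :=
              (hD U).2 ⟨(hW U).2 (Or.inl hUT), hUnat, A, hAnat, hAU, hAnmU, hAneU⟩
            exact hmin U hUD (natnself U hUnat) hUB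
        · -- V = U : then A = B, contradiction
          apply hAne
          intro u
          constructor
          · intro hu
            rcases (hVs u).1 hu with h' | h'
            · exact (hUs u).2 (Or.inl ((hVUe u).1 h'))
            · exact (hUs u).2 (Or.inr (eqE_trans' mem h' hVUe))
          · intro hu
            rcases (hUs u).1 hu with h' | h'
            · exact (hVs u).2 (Or.inl ((hVUe u).2 h'))
            · exact (hVs u).2 (Or.inr (eqE_trans' mem h' (eqE_symm' mem hVUe)))
end

section
/- Trichotomy for natural numbers: if S and T are natural numbers (ordinal numbers with first number α), then S ∈ T or S = T or T ∈ S. -/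
/-- `X` is "ordinal-like": either extensionally equal to `α`, or a successor
containing `α`. -/
abbrev OrdL {Obj : Type} (mem : Obj → Obj → Prop) (α X : Obj) : Prop :=
  eqE mem X α ∨ (mem α X ∧ ∃ U, isUnionOf mem U X ∧ isSuccOf mem X U)

/-- Trichotomy for natural numbers. -/
theorem nat_trichotomy {Obj : Type} (mem : Obj → Obj → Prop)
    (subst : ∀ s t v, eqE mem s t → mem t v → mem s v)
    (indiv : ∀ p s, mem s p → mem p p → eqE mem s p)
    (pairing : ∀ s t, ∃ v, ∀ u, mem u v ↔ (eqE mem u s ∨ eqE mem u t))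
    (union : ∀ s, ∃ v, isUnionOf mem v s)
    (regularity : ∀ s, (∃ v, mem v s ∧ ¬ mem v v) →
      ∃ v, mem v s ∧ ¬ mem v v ∧ ∀ u, mem u s → ¬ mem u u → ¬ mem u v)
    (spec : ∀ (Φ : Obj → Prop) (s : Obj), (∃ u, mem u s ∧ Φ u) →
      ∃ v, ∀ u, mem u v ↔ (mem u s ∧ Φ u))
    (nonemptyAx : ∀ t : Obj, ∃ u, mem u t)
    (p q α : Obj) (hp : mem p p) (hq : mem q q)
    (hα : ∀ u, mem u α ↔ (eqE mem u p ∨ eqE mem u q))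
    (S T : Obj) (hS : isNat mem α S) (hT : isNat mem α T) :
    mem S T ∨ eqE mem S T ∨ mem T S := by
  classical
  -- basic facts about extensional equality
  have Erefl : ∀ a, eqE mem a a := fun a u => Iff.rfl
  have Esymm : ∀ {a b : Obj}, eqE mem a b → eqE mem b a := fun h u => (h u).symm
  have Etrans : ∀ {a b c : Obj}, eqE mem a b → eqE mem b c → eqE mem a c :=
    fun h1 h2 u => (h1 u).trans (h2 u)
  -- members of α are self-membered individuals
  have memα_selfmem : ∀ x, mem x α → mem x x := by
    intro x hx
    rcases (hα x).mp hx with h | h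
    · exact (h x).mpr (subst x p p h hp)
    · exact (h x).mpr (subst x q q h hq)
  have memα_indiv : ∀ x, mem x α → ∀ s, mem s x → eqE mem s x :=
    fun x hx s hs => indiv x s hs (memα_selfmem x hx)
  have selfmem_imp : ∀ Z, mem α Z → mem Z Z → mem α α ∧ eqE mem α Z := by
    intro Z hαZ hZZ
    have h := indiv Z α hαZ hZZ
    exact ⟨(h α).mpr hαZ, h⟩
  -- transitivity of ordinal-like objects
  have transNat : ∀ N, OrdL mem α N → ∀ X Y, mem X N → mem Y X → mem Y N := by
    intro N hN X Y hXN hYX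
    rcases hN with hN | ⟨hαN, U, hU, hSu⟩
    · have hXα : mem X α := (hN X).mp hXN
      exact subst Y X N (memα_indiv X hXα Y hYX) hXN
    · exact (hSu Y).mpr (Or.inl ((hU Y).mpr ⟨X, hXN, hYX⟩))
  -- the successor of any object exists
  have mkSucc : ∀ x, ∃ y, ∀ u, mem u y ↔ (mem u x ∨ eqE mem u x) := by
    intro x
    obtain ⟨s, hs⟩ := pairing x x
    obtain ⟨t, ht⟩ := pairing x s
    obtain ⟨y, hy⟩ := union t
    refine ⟨y, fun u => ⟨?_, ?_⟩⟩
    · intro hu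
      obtain ⟨z, hzt, huz⟩ := (hy u).mp hu
      rcases (ht z).mp hzt with h | h
      · exact Or.inl ((h u).mp huz)
      · refine Or.inr ?_
        rcases (hs u).mp ((h u).mp huz) with h' | h' <;> exact h'
    · intro hu
      rcases hu with hu | hu
      · exact (hy u).mpr ⟨x, (ht x).mpr (Or.inl (Erefl x)), hu⟩
      · exact (hy u).mpr ⟨s, (ht s).mpr (Or.inr (Erefl s)), (hs u).mpr (Or.inl hu)⟩
  choose sp hsp using mkSucc
  -- S and T are ordinal-like
  have hOrdS : OrdL mem α S := by
    rcases hS.2 S (Or.inr (Erefl S)) with (h | h) | h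
    · exact absurd h hS.1
    · exact Or.inl h
    · exact Or.inr h
  have hOrdT : OrdL mem α T := by
    rcases hT.2 T (Or.inr (Erefl T)) with (h | h) | h
    · exact absurd h hT.1
    · exact Or.inl h
    · exact Or.inr h
  -- the degenerate case α ∈ α is impossible (since a natural number S exists)
  have hdeg : ¬ mem α α := by
    intro hαα
    have key : ∀ r, mem r r → eqE mem α r → (∀ u, eqE mem u r → mem u α) → False := by
      intro r hrr hEαr hur
      have hall : ∀ u, mem u α → eqE mem u r := fun u hu => indiv r u ((hEαr u).mp hu) hrr
      have selfr : ∀ x, eqE mem x r → mem x x := fun x h => (h x).mpr (subst x r r h hrr)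
      have hNLS : mem α S ∧ ∃ U, isUnionOf mem U S ∧ isSuccOf mem S U := by
        rcases hOrdS with h | h
        · exact absurd (hur S (Etrans h hEαr)) hS.1
        · exact h
      have hSnsm : ¬ mem S S := by
        intro hSS
        obtain ⟨_, hEαS⟩ := selfmem_imp S hNLS.1 hSS
        exact hS.1 (hur S (Etrans (Esymm hEαS) hEαr))
      obtain ⟨m, hmSP, hmnsm, hmin⟩ :=
        regularity (sp S) ⟨S, (hsp S S).mpr (Or.inr (Erefl S)), hSnsm⟩
      have hm' : mem m S ∨ eqE mem m S := (hsp S m).mp hmSP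
      rcases hS.2 m hm' with (hmα | hmEα) | ⟨hαm, V, hVu, hVs⟩
      · exact hmnsm (selfr m (hall m hmα))
      · exact hmnsm (selfr m (Etrans hmEα hEαr))
      · have hVm : mem V m := (hVs V).mpr (Or.inr (Erefl V))
        have hVS : mem V S := by
          rcases hm' with h | h
          · exact transNat S hOrdS m V h hVm
          · exact (h V).mp hVm
        have contra : eqE mem V r → False := by
          intro hEVr
          have hVV : mem V V := selfr V hEVr
          have hEmα : eqE mem m α := by
            intro u
            constructor
            · intro hu
              rcases (hVs u).mp hu with h | h
              · exact hur u (Etrans (indiv V u h hVV) hEVr)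
              · exact hur u (Etrans h hEVr)
            · intro hu
              exact (hVs u).mpr (Or.inr (Etrans (hall u hu) (Esymm hEVr)))
          exact hmnsm (selfr m (Etrans hEmα hEαr))
        rcases hS.2 V (Or.inl hVS) with (hVα | hVEα) | ⟨hαV, _⟩
        · exact contra (hall V hVα)
        · exact contra (Etrans hVEα hEαr)
        · by_cases hVV : mem V V
          · exact contra (Etrans (Esymm (selfmem_imp V hαV hVV).2) hEαr)
          · exact absurd hVm (hmin V ((hsp S V).mpr (Or.inl hVS)) hVV)
    rcases (hα α).mp hαα with h | h
    · exact key p hp h (fun u hu => (hα u).mpr (Or.inl hu))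
    · exact key q hq h (fun u hu => (hα u).mpr (Or.inr hu))
  -- ordinal-like objects are not self-membered
  have ord_nsm : ∀ X, OrdL mem α X → ¬ mem X X := by
    intro X hX hXX
    rcases hX with h | ⟨hαX, _⟩
    · exact hdeg (subst α X α (Esymm h) ((h X).mp hXX))
    · exact hdeg (selfmem_imp X hαX hXX).1
  -- ε-induction over the ordinal-like elements of M ∪ {M}
  have ind : ∀ M, isNat mem α M → ∀ Φ : Obj → Prop,
      (∀ X Y, eqE mem X Y → Φ Y → Φ X) → Φ α →
      (∀ X W, (mem X M ∨ eqE mem X M) → mem α X → isUnionOf mem W X →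
        isSuccOf mem X W → mem W M → OrdL mem α W → Φ W → Φ X) →
      ∀ X, (mem X M ∨ eqE mem X M) → OrdL mem α X → Φ X := by
    intro M hM Φ hresp hbase hstep X hXM hXord
    by_contra hnX
    have hOrdM : OrdL mem α M := by
      rcases hM.2 M (Or.inr (Erefl M)) with (h | h) | h
      · exact absurd h hM.1
      · exact Or.inl h
      · exact Or.inr h
    obtain ⟨D, hD⟩ := spec (fun u => OrdL mem α u ∧ ¬ Φ u) (sp M)
      ⟨X, (hsp M X).mpr hXM, hXord, hnX⟩
    obtain ⟨m, hmD, hmnsm, hmin⟩ := regularity D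
      ⟨X, (hD X).mpr ⟨(hsp M X).mpr hXM, hXord, hnX⟩, ord_nsm X hXord⟩
    obtain ⟨hmMP, hmOrd, hmnΦ⟩ := (hD m).mp hmD
    rcases hmOrd with hmEα | ⟨hαm, W, hWu, hWs⟩
    · exact hmnΦ (hresp m α hmEα hbase)
    · have hWm : mem W m := (hWs W).mpr (Or.inr (Erefl W))
      have hmM : mem m M ∨ eqE mem m M := (hsp M m).mp hmMP
      have hWM : mem W M := by
        rcases hmM with h | h
        · exact transNat M hOrdM m W h hWm
        · exact (h W).mp hWm
      have hWord : OrdL mem α W := by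
        rcases hM.2 W (Or.inl hWM) with (hWα | h) | h
        · exfalso
          have hWW := memα_selfmem W hWα
          rcases (hWs α).mp hαm with h' | h'
          · exact hdeg (selfmem_imp W h' hWW).1
          · exact hdeg ((h' α).mpr (subst α W W h' hWW))
        · exact Or.inl h
        · exact Or.inr h
      have hΦW : Φ W := by
        by_contra hnW
        exact absurd hWm (hmin W ((hD W).mpr ⟨(hsp M W).mpr (Or.inl hWM), hWord, hnW⟩)
          (ord_nsm W hWord))
      exact hmnΦ (hstep m W hmM hαm hWu hWs hWM hWord hΦW)
  -- key lemma: if n < m then n⁺ ≤ m, for m in T ∪ {T}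
  have L2 : ∀ n, OrdL mem α n → mem n T → (mem (sp n) T ∨ eqE mem (sp n) T) := by
    refine ind T hT
      (fun m => ∀ n, OrdL mem α n → mem n m → (mem (sp n) m ∨ eqE mem (sp n) m))
      ?_ ?_ ?_ T (Or.inr (Erefl T)) hOrdT
    · -- respects extensional equality
      intro X Y hXY hY n hn hnX
      have hnY : mem n Y := (hXY n).mp hnX
      rcases hY n hn hnY with h | h
      · exact Or.inl ((hXY (sp n)).mpr h)
      · exact Or.inr (Etrans h (Esymm hXY))
    · -- base case α
      intro n hn hnα
      exact absurd (memα_selfmem n hnα) (ord_nsm n hn)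
    · -- successor step
      intro X W hXT hαX hWu hWs hWT hWord hIH n hn hnX
      rcases (hWs n).mp hnX with hnW | hnW
      · rcases hIH n hn hnW with h | h
        · exact Or.inl ((hWs (sp n)).mpr (Or.inl h))
        · exact Or.inl (subst (sp n) W X h ((hWs W).mpr (Or.inr (Erefl W))))
      · refine Or.inr fun u => ?_
        rw [hsp n u, hWs u]
        constructor
        · rintro (h | h)
          · exact Or.inl ((hnW u).mp h)
          · exact Or.inr (Etrans h hnW)
        · rintro (h | h)
          · exact Or.inl ((hnW u).mpr h)
          · exact Or.inr (Etrans h (Esymm hnW))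
  -- main induction: trichotomy of X with T, for X in S ∪ {S}
  refine ind S hS (fun X => mem X T ∨ eqE mem X T ∨ mem T X) ?_ ?_ ?_
    S (Or.inr (Erefl S)) hOrdS
  · -- respects extensional equality
    intro X Y hXY hY
    rcases hY with h | h | h
    · exact Or.inl (subst X Y T hXY h)
    · exact Or.inr (Or.inl (Etrans hXY h))
    · exact Or.inr (Or.inr ((hXY T).mpr h))
  · -- base case α
    rcases hOrdT with h | ⟨hαT, _⟩
    · exact Or.inr (Or.inl (Esymm h))
    · exact Or.inl hαT
  · -- successor step
    intro X W hXS hαX hWu hWs hWS hWord hΦW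
    have hEX : eqE mem X (sp W) := fun u => (hWs u).trans ((hsp W u).symm)
    rcases hΦW with h | h | h
    · rcases L2 W hWord h with h' | h'
      · exact Or.inl (subst X (sp W) T hEX h')
      · exact Or.inr (Or.inl (Etrans hEX h'))
    · exact Or.inr (Or.inr (subst T W X (Esymm h) ((hWs W).mpr (Or.inr (Erefl W)))))
    · exact Or.inr (Or.inr ((hWs T).mpr (Or.inl h)))
end

section
/- If a natural number belongs to V, every member of V is a natural number, V ⊆ S, and S is a natural number, then ⋃V is the greatest natural number in V: ⋃V ∈ V and for every u ∈ V, ⋃V ∉ u. -/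
/-- If a natural number belongs to V, every member of V is a natural number,
V ⊆ S and S is a natural number, then ⋃V is the greatest number in V. -/
theorem union_greatest {Obj : Type} (mem : Obj → Obj → Prop)
    (subst : ∀ s t v, eqE mem s t → mem t v → mem s v)
    (indiv : ∀ p s, mem s p → mem p p → eqE mem s p)
    (pairing : ∀ s t, ∃ v, ∀ u, mem u v ↔ (eqE mem u s ∨ eqE mem u t))
    (union : ∀ s, ∃ v, isUnionOf mem v s)
    (regularity : ∀ s, (∃ v, mem v s ∧ ¬ mem v v) →
      ∃ v, mem v s ∧ ¬ mem v v ∧ ∀ u, mem u s → ¬ mem u u → ¬ mem u v)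
    (spec : ∀ (Φ : Obj → Prop) (s : Obj), (∃ u, mem u s ∧ Φ u) →
      ∃ v, ∀ u, mem u v ↔ (mem u s ∧ Φ u))
    (nonemptyAx : ∀ t : Obj, ∃ u, mem u t)
    (p q α : Obj) (hp : mem p p) (hq : mem q q)
    (hα : ∀ u, mem u α ↔ (eqE mem u p ∨ eqE mem u q))
    (V S UV : Obj)
    (hmem : ∃ n, mem n V ∧ isNat mem α n)
    (hall : ∀ u, mem u V → isNat mem α u)
    (hVS : subE mem V S) (hS : isNat mem α S)
    (hUV : isUnionOf mem UV V) :
    mem UV V ∧ ∀ u, mem u V → ¬ mem UV u := by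
  classical
  have erefl : ∀ s : Obj, eqE mem s s := fun s u => Iff.rfl
  have esymm : ∀ {s t : Obj}, eqE mem s t → eqE mem t s := fun h u => (h u).symm
  -- anything in α is self-membered
  have memα_self : ∀ x, mem x α → mem x x := by
    intro x hx
    rcases (hα x).1 hx with h | h
    · exact (h x).2 (subst x p p h hp)
    · exact (h x).2 (subst x q q h hq)
  have hpα : mem p α := (hα p).2 (Or.inl (erefl p))
  -- naturals are not self-membered
  have nat_irrefl : ∀ n, isNat mem α n → ¬ mem n n := by
    intro n hn hself
    rcases hn.2 n (Or.inr (erefl n)) with (h | h) | ⟨hαn, _⟩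
    · exact hn.1 h
    · have hpn : mem p n := (h p).2 hpα
      have hepn : eqE mem p n := indiv n p hpn hself
      exact hn.1 (subst n p α (esymm hepn) hpα)
    · have heαn : eqE mem α n := indiv n α hαn hself
      have hpn : mem p n := (heαn p).1 hpα
      have hepn : eqE mem p n := indiv n p hpn hself
      exact hn.1 (subst n p α (esymm hepn) hpα)
  -- naturals are transitive
  have nat_trans : ∀ N, isNat mem α N → ∀ z x, mem z N → mem x z → mem x N := by
    intro N hN z x hzN hxz
    rcases hN.2 N (Or.inr (erefl N)) with (h | h) | ⟨hαN, U, hU, hsucc⟩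
    · exact absurd h hN.1
    · have hzα : mem z α := (h z).1 hzN
      have hzz : mem z z := memα_self z hzα
      exact subst x z N (indiv z x hxz hzz) hzN
    · exact (hsucc x).2 (Or.inl ((hU x).2 ⟨z, hzN, hxz⟩))
  -- construct W0 = S ∪ {S}
  obtain ⟨T, hT⟩ := pairing S S
  obtain ⟨P2, hP2⟩ := pairing S T
  obtain ⟨W0, hW0U⟩ := union P2
  have hW0 : ∀ u, mem u W0 ↔ (mem u S ∨ eqE mem u S) := by
    intro u
    constructor
    · intro h
      rcases (hW0U u).1 h with ⟨z, hz, huz⟩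
      rcases (hP2 z).1 hz with h1 | h1
      · exact Or.inl ((h1 u).1 huz)
      · have huT : mem u T := (h1 u).1 huz
        rcases (hT u).1 huT with h2 | h2 <;> exact Or.inr h2
    · rintro (h | h)
      · exact (hW0U u).2 ⟨S, (hP2 S).2 (Or.inl (erefl S)), h⟩
      · exact (hW0U u).2 ⟨T, (hP2 T).2 (Or.inr (erefl T)), (hT u).2 (Or.inl h)⟩
  obtain ⟨n, hnV, hn⟩ := hmem
  -- W = set of upper bounds of V inside S ∪ {S}
  have hSW0 : mem S W0 := (hW0 S).2 (Or.inr (erefl S))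
  have hΦS : ∀ v, mem v V → (mem v S ∨ eqE mem v S) := fun v hv => Or.inl (hVS v hv)
  obtain ⟨W, hW⟩ :=
    spec (fun u => ∀ v, mem v V → (mem v u ∨ eqE mem v u)) W0 ⟨S, hSW0, hΦS⟩
  have hSW : mem S W := (hW S).2 ⟨hSW0, hΦS⟩
  -- members of W are not self-membered
  have Wirr : ∀ u, mem u W → ¬ mem u u := by
    intro u hu huu
    obtain ⟨_, hΦ⟩ := (hW u).1 hu
    rcases hΦ n hnV with h | h
    · have hnu : eqE mem n u := indiv u n h huu
      exact nat_irrefl n hn ((hnu n).2 h)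
    · have hun : mem u n := (h u).2 huu
      exact nat_irrefl n hn (subst n u n h hun)
  obtain ⟨w, hwW, hww, hminr⟩ := regularity W ⟨S, hSW, Wirr S hSW⟩
  have hmin : ∀ u, mem u W → ¬ mem u w := fun u hu => hminr u hu (Wirr u hu)
  obtain ⟨hwW0, hΦw⟩ := (hW w).1 hwW
  have hwS : mem w S ∨ eqE mem w S := (hW0 w).1 hwW0
  -- key: some member of V is extensionally equal to w
  have key : ∃ v0, mem v0 V ∧ eqE mem v0 w := by
    rcases hS.2 w hwS with (h | h) | ⟨hαw, U, hU, hsucc⟩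
    · exact absurd (memα_self w h) hww
    · refine ⟨n, hnV, ?_⟩
      rcases hΦw n hnV with h1 | h1
      · exact absurd (memα_self n ((h n).1 h1)) (nat_irrefl n hn)
      · exact h1
    · by_contra hkey
      have hstrict : ∀ v, mem v V → mem v w := by
        intro v hv
        rcases hΦw v hv with h1 | h1
        · exact h1
        · exact absurd ⟨v, hv, h1⟩ hkey
      have hUw : mem U w := (hsucc U).2 (Or.inr (erefl U))
      have hUS : mem U S := by
        rcases hwS with h1 | h1
        · exact nat_trans S hS w U h1 hUw
        · exact (h1 U).1 hUw
      have hΦU : ∀ v, mem v V → (mem v U ∨ eqE mem v U) := fun v hv =>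
        (hsucc v).1 (hstrict v hv)
      have hUW : mem U W := (hW U).2 ⟨(hW0 U).2 (Or.inl hUS), hΦU⟩
      exact hmin U hUW hUw
  obtain ⟨v0, hv0V, hv0w⟩ := key
  have hwV : mem w V := subst w v0 V (esymm hv0w) hv0V
  have hwnat : isNat mem α w := hall w hwV
  have hmax : ∀ u, mem u V → ¬ mem w u := by
    intro u huV hwu
    rcases hΦw u huV with h | h
    · exact hww (nat_trans w hwnat u w h hwu)
    · exact hww ((h w).1 hwu)
  have hUVw : eqE mem UV w := by
    intro u
    constructor
    · intro h
      rcases (hUV u).1 h with ⟨z, hzV, huz⟩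
      rcases hΦw z hzV with h1 | h1
      · exact nat_trans w hwnat z u h1 huz
      · exact (h1 u).1 huz
    · intro h
      exact (hUV u).2 ⟨v0, hv0V, (hv0w u).2 h⟩
  exact ⟨subst UV w V hUVw hwV,
    fun u huV hUVu => hmax u huV (subst w UV u (esymm hUVw) hUVu)⟩
end

section
/- Principle of mathematical induction for natural numbers: if S and T are natural numbers, S ∈ T, Φ(S) holds, and for every X with X ∉ S, X ∈ T, Φ(X) implies Φ(X ∪ {X}), then Φ(T) holds. -/
/-- The principle of mathematical induction for natural numbers. -/
theorem nat_induction {Obj : Type} (mem : Obj → Obj → Prop)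
    (subst : ∀ s t v, eqE mem s t → mem t v → mem s v)
    (indiv : ∀ p s, mem s p → mem p p → eqE mem s p)
    (pairing : ∀ s t, ∃ v, ∀ u, mem u v ↔ (eqE mem u s ∨ eqE mem u t))
    (union : ∀ s, ∃ v, isUnionOf mem v s)
    (regularity : ∀ s, (∃ v, mem v s ∧ ¬ mem v v) →
      ∃ v, mem v s ∧ ¬ mem v v ∧ ∀ u, mem u s → ¬ mem u u → ¬ mem u v)
    (spec : ∀ (Φ : Obj → Prop) (s : Obj), (∃ u, mem u s ∧ Φ u) →
      ∃ v, ∀ u, mem u v ↔ (mem u s ∧ Φ u))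
    (nonemptyAx : ∀ t : Obj, ∃ u, mem u t)
    (p q α : Obj) (hp : mem p p) (hq : mem q q)
    (hα : ∀ u, mem u α ↔ (eqE mem u p ∨ eqE mem u q))
    (Φ : Obj → Prop)
    (Φext : ∀ a b, eqE mem a b → Φ a → Φ b)
    (S T : Obj) (hS : isNat mem α S) (hT : isNat mem α T)
    (hST : mem S T) (hΦS : Φ S)
    (hstep : ∀ X SX, ¬ mem X S → mem X T → Φ X → isSuccOf mem SX X → Φ SX) :
    Φ T := by
  classical
  by_contra hΦT
  have eqrefl : ∀ a, eqE mem a a := fun _ _ => Iff.rfl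
  -- irreflexivity of S
  have hSS : ¬ mem S S := by
    intro h
    rcases hS.2 S (Or.inr (eqrefl S)) with (hc | hc) | ⟨hc, _⟩
    · exact hS.1 hc
    · exact hS.1 ((hc S).mp h)
    · exact hS.1 (((indiv S α hc h) S).mpr h)
  -- T = ⋃T ∪ {⋃T}
  have hTstruct : ∃ UT, isUnionOf mem UT T ∧ isSuccOf mem T UT := by
    rcases hT.2 T (Or.inr (eqrefl T)) with (hc | hc) | ⟨_, h⟩
    · exact absurd hc hT.1
    · exact absurd ((hc S).mp hST) hS.1
    · exact h
  obtain ⟨UT, hUTu, hUTs⟩ := hTstruct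
  have transT : ∀ a b, mem a b → mem b T → mem a T := by
    intro a b hab hbT
    exact (hUTs a).mpr (Or.inl ((hUTu a).mpr ⟨b, hbT, hab⟩))
  -- build W = T ∪ {T}
  obtain ⟨sing, hsing⟩ := pairing T T
  obtain ⟨pr, hpr⟩ := pairing T sing
  obtain ⟨W, hW⟩ := union pr
  have hWmem : ∀ u, mem u W ↔ (mem u T ∨ eqE mem u T) := by
    intro u
    constructor
    · intro h
      rcases (hW u).mp h with ⟨z, hz, huz⟩
      rcases (hpr z).mp hz with hz1 | hz2
      · exact Or.inl ((hz1 u).mp huz)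
      · rcases (hsing u).mp ((hz2 u).mp huz) with h' | h'
        · exact Or.inr h'
        · exact Or.inr h'
    · rintro (h | h)
      · exact (hW u).mpr ⟨T, (hpr T).mpr (Or.inl (eqrefl T)), h⟩
      · exact (hW u).mpr ⟨sing, (hpr sing).mpr (Or.inr (eqrefl sing)),
          (hsing u).mpr (Or.inl h)⟩
  -- B = {X ∈ T ∪ {T} : ¬Φ X ∧ S ∈ X}
  obtain ⟨B, hB⟩ := spec (fun X => ¬ Φ X ∧ mem S X) W
    ⟨T, (hWmem T).mpr (Or.inr (eqrefl T)), hΦT, hST⟩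
  have hBns : ∀ u, mem u B → ¬ mem u u := by
    intro u hu huu
    obtain ⟨_, hnΦ, hSu⟩ := (hB u).mp hu
    exact hnΦ (Φext S u (indiv u S hSu huu) hΦS)
  have hTB : mem T B := (hB T).mpr ⟨(hWmem T).mpr (Or.inr (eqrefl T)), hΦT, hST⟩
  obtain ⟨v, hvB, hvv, hmin⟩ := regularity B ⟨T, hTB, hBns T hTB⟩
  obtain ⟨hvW, hnΦv, hSv⟩ := (hB v).mp hvB
  have hvT : mem v T ∨ eqE mem v T := (hWmem v).mp hvW
  rcases hT.2 v hvT with (hc | hc) | ⟨hαv, U, hUu, hUs⟩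
  · -- v ∈ α
    rcases (hα v).mp hc with hp' | hq'
    · exact hS.1 ((hα S).mpr (Or.inl (indiv p S ((hp' S).mp hSv) hp)))
    · exact hS.1 ((hα S).mpr (Or.inr (indiv q S ((hq' S).mp hSv) hq)))
  · -- v = α
    exact hS.1 ((hc S).mp hSv)
  · -- α ∈ v, U = ⋃v, v = U ∪ {U}
    have hUv : mem U v := (hUs U).mpr (Or.inr (eqrefl U))
    have hUT : mem U T := by
      rcases hvT with h | h
      · exact transT U v hUv h
      · exact (h U).mp hUv
    rcases (hUs S).mp hSv with hSU | hSU
    · -- S ∈ U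
      have hUS : ¬ mem U S := by
        intro hUS
        rcases hS.2 S (Or.inr (eqrefl S)) with (hc2 | hc2) | ⟨hαS, US, hUSu, hUSs⟩
        · exact hS.1 hc2
        · rcases (hα U).mp ((hc2 U).mp hUS) with h' | h'
          · exact hS.1 ((hα S).mpr (Or.inl (indiv p S ((h' S).mp hSU) hp)))
          · exact hS.1 ((hα S).mpr (Or.inr (indiv q S ((h' S).mp hSU) hq)))
        · exact hSS ((hUSs S).mpr (Or.inl ((hUSu S).mpr ⟨U, hUS, hSU⟩)))
      by_cases hΦU : Φ U
      · exact hnΦv (hstep U v hUS hUT hΦU hUs)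
      · have hUB : mem U B := (hB U).mpr ⟨(hWmem U).mpr (Or.inl hUT), hΦU, hSU⟩
        exact hmin U hUB (hBns U hUB) hUv
    · -- S = U (extensionally)
      have hΦU : Φ U := Φext S U hSU hΦS
      have hUS : ¬ mem U S := fun h => hSS (subst S U S hSU h)
      exact hnΦv (hstep U v hUS hUT hΦU hUs)
end

section
/- For every natural number n, ω + n is an ordinal number with first number ω, where ω + 0 = ω ∪ {p,q} and ω + (n+1) = (ω + n) ∪ {ω + n}. -/
/-- For every natural number n, ω + n is an ordinal number with first
number ω. -/
theorem omega_add_nat_isOrd {Obj : Type} (mem : Obj → Obj → Prop)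
    (subst : ∀ s t v, eqE mem s t → mem t v → mem s v)
    (indiv : ∀ p s, mem s p → mem p p → eqE mem s p)
    (pairing : ∀ s t, ∃ v, ∀ u, mem u v ↔ (eqE mem u s ∨ eqE mem u t))
    (union : ∀ s, ∃ v, isUnionOf mem v s)
    (regularity : ∀ s, (∃ v, mem v s ∧ ¬ mem v v) →
      ∃ v, mem v s ∧ ¬ mem v v ∧ ∀ u, mem u s → ¬ mem u u → ¬ mem u v)
    (spec : ∀ (Φ : Obj → Prop) (s : Obj), (∃ u, mem u s ∧ Φ u) →
      ∃ v, ∀ u, mem u v ↔ (mem u s ∧ Φ u))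
    (nonemptyAx : ∀ t : Obj, ∃ u, mem u t)
    (p q α : Obj) (hp : mem p p) (hq : mem q q)
    (hα : ∀ u, mem u α ↔ (eqE mem u p ∨ eqE mem u q))
    (ω : Obj) (hω : ∀ n, mem n ω ↔ (mem n α ∨ isNat mem α n))
    (addW : Obj → Obj)
    (haddW0 : ∀ u, mem u (addW α) ↔ (mem u ω ∨ mem u α))
    (haddWS : ∀ n n', isSuccOf mem n' n → isSuccOf mem (addW n') (addW n))
    (n : Obj) (hn : isNat mem α n) :
    isNat mem ω (addW n) := by
  classical
  have erefl : ∀ s, eqE mem s s := fun _ _ => Iff.rfl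
  have esymm : ∀ {s t : Obj}, eqE mem s t → eqE mem t s := fun h u => (h u).symm
  have etrans : ∀ {s t r : Obj}, eqE mem s t → eqE mem t r → eqE mem s r :=
    fun h1 h2 u => (h1 u).trans (h2 u)
  have selfmem : ∀ x u, mem x x → (mem u x ↔ eqE mem u x) :=
    fun x u hx => ⟨fun h => indiv x u h hx, fun h => subst u x x h hx⟩
  have succEx : ∀ x : Obj, ∃ x', isSuccOf mem x' x := by
    intro x
    obtain ⟨P1, hP1⟩ := pairing x x
    obtain ⟨P2, hP2⟩ := pairing x P1
    obtain ⟨x', hx'⟩ := union P2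
    refine ⟨x', fun u => (hx' u).trans ?_⟩
    constructor
    · rintro ⟨z, hzP, huz⟩
      rcases (hP2 z).1 hzP with hz | hz
      · exact Or.inl ((hz u).1 huz)
      · rcases (hP1 u).1 ((hz u).1 huz) with h | h <;> exact Or.inr h
    · rintro (h | h)
      · exact ⟨x, (hP2 x).2 (Or.inl (erefl x)), h⟩
      · exact ⟨P1, (hP2 P1).2 (Or.inr (erefl P1)), (hP1 u).2 (Or.inl h)⟩
  have hpa : mem p α := (hα p).2 (Or.inl (erefl p))
  have hqa : mem q α := (hα q).2 (Or.inr (erefl q))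
  by_cases hpq : eqE mem p q
  · -- degenerate case: p ≈ q, show the hypotheses on n are contradictory
    exfalso
    have hαp : eqE mem α p := by
      intro u
      rw [hα u, selfmem p u hp]
      exact ⟨fun h => h.elim id (fun h' => etrans h' (esymm hpq)), Or.inl⟩
    obtain ⟨hnα, hcl⟩ := hn
    rcases hcl n (Or.inr (erefl n)) with (h | h) | ⟨han, U, hU, hS⟩
    · exact hnα h
    · exact hnα ((hα n).2 (Or.inl (etrans h hαp)))
    · have htr : ∀ x u, mem x n → mem u x → mem u n :=
        fun x u hx hu => (hS u).2 (Or.inl ((hU u).2 ⟨x, hx, hu⟩))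
      have hUn : mem U n := (hS U).2 (Or.inr (erefl U))
      by_cases hall : ∀ x, mem x n → mem x x
      · have hmem_p : ∀ x, mem x n → eqE mem x p := by
          intro x hx
          rcases hcl x (Or.inl hx) with (h' | h') | ⟨hax, _, _⟩
          · rcases (hα x).1 h' with h'' | h''
            · exact h''
            · exact etrans h'' (esymm hpq)
          · exact etrans h' hαp
          · exact etrans (esymm (indiv x α hax (hall x hx))) hαp
        have hnal : eqE mem n α := by
          intro u
          rw [hα u]
          constructor
          · exact fun hu => Or.inl (hmem_p u hu)
          · have hUp := hmem_p U hUn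
            rintro (h' | h')
            · exact subst u U n (etrans h' (esymm hUp)) hUn
            · exact subst u U n (etrans (etrans h' (esymm hpq)) (esymm hUp)) hUn
        exact hnα ((hα n).2 (Or.inl (etrans hnal hαp)))
      · push_neg at hall
        obtain ⟨x0, hx0n, hx0⟩ := hall
        obtain ⟨m, hmn, hmm, hmin⟩ := regularity n ⟨x0, hx0n, hx0⟩
        have memp_self : ∀ x, eqE mem x p → mem x x :=
          fun x h => (h x).2 (subst x p p h hp)
        rcases hcl m (Or.inl hmn) with (h' | h') | ⟨ham, V, hV, hS2⟩
        · rcases (hα m).1 h' with h'' | h''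
          · exact hmm (memp_self m h'')
          · exact hmm (memp_self m (etrans h'' (esymm hpq)))
        · exact hmm (memp_self m (etrans h' hαp))
        · have hVm : mem V m := (hS2 V).2 (Or.inr (erefl V))
          by_cases hVV : mem V V
          · have hmV : eqE mem m V := by
              intro u
              rw [hS2 u]
              exact ⟨fun h => h.elim id fun h' => (selfmem V u hVV).2 h', Or.inl⟩
            exact hmm ((hS2 m).2 (Or.inr hmV))
          · exact hmin V (htr m V hmn hVm) hVV hVm
  · -- main case: p and q are distinct individuals
    have h_nαp : ¬ eqE mem α p := fun h => hpq (esymm (indiv p q ((h q).1 hqa) hp))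
    have h_nαq : ¬ eqE mem α q := fun h => hpq (indiv q p ((h p).1 hpa) hq)
    have hana : ¬ mem α α := fun h => ((hα α).1 h).elim h_nαp h_nαq
    have hnata : isNat mem α α := ⟨hana, fun _ hX => Or.inl hX⟩
    have haw : mem α ω := (hω α).2 (Or.inr hnata)
    have haSubw : ∀ u, mem u α → mem u ω := fun u h => (hω u).2 (Or.inl h)
    have hpw : mem p ω := haSubw p hpa
    have hqw : mem q ω := haSubw q hqa
    have hwa_ne : ¬ mem ω α := by
      intro h
      rcases (hα ω).1 h with h' | h'
      · exact hpq (esymm (indiv p q ((h' q).1 hqw) hp))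
      · exact hpq (indiv q p ((h' p).1 hpw) hq)
    have hwα_ne : ¬ eqE mem ω α := fun h => hana ((h α).1 haw)
    have hnns : ∀ X, isNat mem α X → ¬ mem X X := by
      intro X hX hXX
      rcases hX.2 X (Or.inr (erefl X)) with (h | h) | ⟨haX, _⟩
      · exact hX.1 h
      · exact hX.1 ((h X).1 hXX)
      · exact hana (((indiv X α haX hXX) α).2 haX)
    have hXna : ∀ X, mem α X → ¬ mem X α := by
      intro X haX hXα
      rcases (hα X).1 hXα with h | h
      · exact h_nαp (indiv p α ((h α).1 haX) hp)
      · exact h_nαq (indiv q α ((h α).1 haX) hq)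
    have htransNat : ∀ N, isNat mem α N → ∀ m u, mem m N → mem u m → mem u N := by
      intro N hN m u hmN hum
      rcases hN.2 N (Or.inr (erefl N)) with (h | h) | ⟨haN, U, hU, hS⟩
      · exact absurd h hN.1
      · have hma : mem m α := (h m).1 hmN
        have hup : eqE mem u p ∨ eqE mem u q := by
          rcases (hα m).1 hma with h' | h'
          · exact Or.inl (indiv p u ((h' u).1 hum) hp)
          · exact Or.inr (indiv q u ((h' u).1 hum) hq)
        exact (h u).2 ((hα u).2 hup)
      · exact (hS u).2 (Or.inl ((hU u).2 ⟨m, hmN, hum⟩))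
    have hnat_of_eqα : ∀ X, eqE mem X α → isNat mem α X := by
      intro X h
      refine ⟨fun hXα => ?_, fun Y hY => Or.inl ?_⟩
      · rcases (hα X).1 hXα with h' | h'
        · exact h_nαp (etrans (esymm h) h')
        · exact h_nαq (etrans (esymm h) h')
      · rcases hY with hY | hY
        · exact Or.inl ((h Y).1 hY)
        · exact Or.inr (etrans hY h)
    have hhered2 : ∀ N, isNat mem α N → ∀ m, mem m N → (mem m α ∨ isNat mem α m) := by
      intro N hN m hm
      rcases hN.2 m (Or.inl hm) with (h | h) | ⟨ham, U, hU, hS⟩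
      · exact Or.inl h
      · exact Or.inr (hnat_of_eqα m h)
      · refine Or.inr ⟨fun hma => hXna m ham hma, fun X hX => ?_⟩
        rcases hX with h' | h'
        · exact hN.2 X (Or.inl (htransNat N hN m X hm h'))
        · exact Or.inr ⟨(h' α).2 ham, U,
            fun u => (hU u).trans (exists_congr fun z => and_congr_left fun _ => (h' z).symm),
            fun u => (h' u).trans (hS u)⟩
    have hhered : ∀ N, isNat mem α N → ∀ m, mem m N → mem m ω :=
      fun N hN m hm => (hhered2 N hN m hm).elim (haSubw m) (fun h => (hω m).2 (Or.inr h))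
    have hw_nosucc : ∀ U, isUnionOf mem U ω → isSuccOf mem ω U → False := by
      intro U hU hS
      have hUw : mem U ω := (hS U).2 (Or.inr (erefl U))
      rcases (hω U).1 hUw with hUα | hUnat
      · have hαU : eqE mem α p ∨ eqE mem α q := by
          rcases (hS α).1 haw with h | h
          · rcases (hα U).1 hUα with h' | h'
            · exact Or.inl (indiv p α ((h' α).1 h) hp)
            · exact Or.inr (indiv q α ((h' α).1 h) hq)
          · rcases (hα U).1 hUα with h' | h'
            · exact Or.inl (etrans h h')
            · exact Or.inr (etrans h h')
        exact hαU.elim h_nαp h_nαq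
      · have hnatw : isNat mem α ω := by
          refine ⟨hwa_ne, fun X hX => ?_⟩
          rcases hX with hXw | hXw
          · rcases (hS X).1 hXw with h | h
            · exact hUnat.2 X (Or.inl h)
            · exact hUnat.2 X (Or.inr h)
          · exact Or.inr ⟨(hXw α).2 haw, U,
              fun u => (hU u).trans (exists_congr fun z => and_congr_left fun _ => (hXw z).symm),
              fun u => (hXw u).trans (hS u)⟩
        exact hnns ω hnatw ((hω ω).2 (Or.inr hnatw))
    have hnatw_of_eqw : ∀ X, eqE mem X ω → isNat mem ω X := by
      intro X h
      refine ⟨fun hXw => ?_, fun Y hY => Or.inl ?_⟩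
      · rcases (hω X).1 hXw with hXα | hXnat
        · rcases (hα X).1 hXα with h' | h'
          · have hwp : eqE mem ω p := etrans (esymm h) h'
            exact hpq (esymm (indiv p q ((hwp q).1 hqw) hp))
          · have hwq : eqE mem ω q := etrans (esymm h) h'
            exact hpq (indiv q p ((hwq p).1 hpw) hq)
        · rcases hXnat.2 X (Or.inr (erefl X)) with (h' | h') | ⟨haX, U, hU, hS⟩
          · exact hXnat.1 h'
          · exact hwα_ne (etrans (esymm h) h')
          · exact hw_nosucc U
              (fun u => (hU u).trans (exists_congr fun z => and_congr_left fun _ => (h z)))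
              (fun u => (esymm h u).trans (hS u))
      · rcases hY with hY | hY
        · exact Or.inl ((h Y).1 hY)
        · exact Or.inr (etrans hY h)
    have hwtrans : ∀ z u, mem z ω → mem u z → mem u ω := by
      intro z u hz hu
      rcases (hω z).1 hz with hzα | hznat
      · rcases (hα z).1 hzα with h | h
        · exact haSubw u ((hα u).2 (Or.inl (indiv p u ((h u).1 hu) hp)))
        · exact haSubw u ((hα u).2 (Or.inr (indiv q u ((h u).1 hu) hq)))
      · exact hhered z hznat u hu
    have hwnat_trans : ∀ B, isNat mem ω B → ∀ m u, mem m B → mem u m → mem u B := by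
      intro B hB m u hm hu
      rcases hB.2 B (Or.inr (erefl B)) with (h | h) | ⟨hwB, U, hU, hS⟩
      · exact absurd h hB.1
      · exact (h u).2 (hwtrans m u ((h m).1 hm) hu)
      · exact (hS u).2 (Or.inl ((hU u).2 ⟨m, hm, hu⟩))
    have hsuccNatw : ∀ B S, isNat mem ω B → isSuccOf mem S B → isNat mem ω S := by
      intro B S hB hSB
      have hBS : mem B S := (hSB B).2 (Or.inr (erefl B))
      have hwS : mem ω S := by
        rcases hB.2 B (Or.inr (erefl B)) with (h | h) | ⟨hwB, _⟩
        · exact absurd h hB.1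
        · exact (hSB ω).2 (Or.inr (esymm h))
        · exact (hSB ω).2 (Or.inl hwB)
      refine ⟨fun hSw => ?_, fun X hX => ?_⟩
      · rcases (hω S).1 hSw with hSα | hSnat
        · rcases (hα S).1 hSα with h | h
          · exact hB.1 (haSubw B ((hα B).2 (Or.inl (indiv p B ((h B).1 hBS) hp))))
          · exact hB.1 (haSubw B ((hα B).2 (Or.inr (indiv q B ((h B).1 hBS) hq))))
        · rcases hSnat.2 ω (Or.inl hwS) with (h | h) | ⟨_, U, hU, hS'⟩
          · exact hwa_ne h
          · exact hwα_ne h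
          · exact absurd (hw_nosucc U hU hS') not_false
      · rcases hX with hXS | hXS
        · rcases (hSB X).1 hXS with h | h
          · exact hB.2 X (Or.inl h)
          · exact hB.2 X (Or.inr h)
        · refine Or.inr ⟨(hXS ω).2 hwS, B, fun u => ?_, fun u => (hXS u).trans (hSB u)⟩
          constructor
          · exact fun huB => ⟨B, (hXS B).2 hBS, huB⟩
          · rintro ⟨z, hzX, huz⟩
            rcases (hSB z).1 ((hXS z).1 hzX) with h | h
            · exact hwnat_trans B hB z u h huz
            · exact (h u).1 huz
    have hWeq : eqE mem (addW α) ω := by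
      intro u
      rw [haddW0 u]
      exact ⟨fun h => h.elim id (haSubw u), Or.inl⟩
    have hbase : ∀ m, eqE mem m α → isNat mem ω (addW m) := by
      intro m hmα
      obtain ⟨m', hm'⟩ := succEx m
      have h1 : isSuccOf mem (addW m') (addW m) := haddWS m m' hm'
      have hm'α : isSuccOf mem m' α := by
        intro u
        exact (hm' u).trans (or_congr (hmα u)
          ⟨fun h => etrans h hmα, fun h => etrans h (esymm hmα)⟩)
      have h2 : isSuccOf mem (addW m') (addW α) := haddWS α m' hm'α
      have hiff : ∀ u, (mem u (addW m) ∨ eqE mem u (addW m)) ↔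
          (mem u (addW α) ∨ eqE mem u (addW α)) :=
        fun u => (h1 u).symm.trans (h2 u)
      apply hnatw_of_eqw
      by_contra hne
      have hAw : mem (addW m) ω := by
        rcases (hiff (addW m)).1 (Or.inr (erefl _)) with h | h
        · exact (hWeq (addW m)).1 h
        · exact absurd (etrans h hWeq) hne
      have hwA : mem ω (addW m) := by
        rcases (hiff ω).2 (Or.inr (esymm hWeq)) with h | h
        · exact h
        · exact absurd (esymm h) hne
      rcases (hω (addW m)).1 hAw with hAα | hAnat
      · rcases (hα (addW m)).1 hAα with h | h
        · have hwp : eqE mem ω p := indiv p ω ((h ω).1 hwA) hp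
          exact hpq (esymm (indiv p q ((hwp q).1 hqw) hp))
        · have hwq : eqE mem ω q := indiv q ω ((h ω).1 hwA) hq
          exact hpq (indiv q p ((hwq p).1 hpw) hq)
      · rcases hAnat.2 ω (Or.inl hwA) with (h | h) | ⟨_, U, hU, hS⟩
        · exact hwa_ne h
        · exact hwα_ne h
        · exact hw_nosucc U hU hS
    by_contra hgoal
    obtain ⟨S, hSn⟩ := succEx n
    have hnS : mem n S := (hSn n).2 (Or.inr (erefl n))
    obtain ⟨B, hB⟩ := spec (fun X => isNat mem α X ∧ ¬ isNat mem ω (addW X)) S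
      ⟨n, hnS, hn, hgoal⟩
    obtain ⟨m, hmB, hmm, hmin⟩ := regularity B ⟨n, (hB n).2 ⟨hnS, hn, hgoal⟩, hnns n hn⟩
    obtain ⟨hmS, hmnat, hmbad⟩ := (hB m).1 hmB
    rcases hmnat.2 m (Or.inr (erefl m)) with (h | h) | ⟨ham, U, hU, hS'⟩
    · exact hmnat.1 h
    · exact hmbad (hbase m h)
    · have hUm : mem U m := (hS' U).2 (Or.inr (erefl U))
      rcases hhered2 m hmnat U hUm with hUα | hUnat
      · rcases (hα U).1 hUα with h' | h'
        · rcases (hS' α).1 ham with h'' | h''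
          · exact h_nαp (indiv p α ((h' α).1 h'') hp)
          · exact h_nαp (etrans h'' h')
        · rcases (hS' α).1 ham with h'' | h''
          · exact h_nαq (indiv q α ((h' α).1 h'') hq)
          · exact h_nαq (etrans h'' h')
      · have hUS : mem U S := by
          rcases (hSn m).1 hmS with h' | h'
          · exact (hSn U).2 (Or.inl (htransNat n hn m U h' hUm))
          · exact (hSn U).2 (Or.inl ((h' U).1 hUm))
        have hUgood : isNat mem ω (addW U) := by
          by_contra hbad
          exact hmin U ((hB U).2 ⟨hUS, hUnat, hbad⟩) (hnns U hUnat) hUm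
        exact hmbad (hsuccNatw (addW U) (addW m) hUgood (haddWS U m hS'))
end
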